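/- For m=0, M=1, the extremal line L_{t₁,t₂} given parametrically by x₁ = ξ₁(1-2a(1-x₃))/(1-2a), x₂ = ξ₁²(1-4a(1-x₃))/(1-4a) (x₃ ∈ [0,1]) has the property that its projection onto the plane {x₃=1} is tangent at the point (u₁,u₂) = (ξ₁/(1-2a), ξ₁²/(1-4a)) to the parabola v₂ = A v₁² with A = (1-2a)²/(1-4a). -/

import Mathlib

/-- For m=0, M=1, the extremal line
x₁(t) = ξ₁(1-2a(1-t))/(1-2a), x₂(t) = ξ₁²(1-4a(1-t))/(1-4a) projects onto the plane
{x₃=1} to the tangent line at (u₁,u₂) = (ξ₁/(1-2a), ξ₁²/(1-4a)) of the parabola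
v₂ = A v₁² with A = (1-2a)²/(1-4a). -/
theorem stmt15 (a ξ₁ : ℝ) (ha : 0 < a) (ha' : a < 1/4) (hξ : ξ₁ ≠ 0) :
    ξ₁^2/(1 - 4*a) = ((1 - 2*a)^2/(1 - 4*a)) * (ξ₁/(1 - 2*a))^2 ∧
    ∀ t : ℝ,
      ξ₁^2*(1 - 4*a*(1 - t))/(1 - 4*a) - ξ₁^2/(1 - 4*a)
        = (2*((1 - 2*a)^2/(1 - 4*a))*(ξ₁/(1 - 2*a))) *
          (ξ₁*(1 - 2*a*(1 - t))/(1 - 2*a) - ξ₁/(1 - 2*a)) := by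
  have h4 : 1 - 4*a ≠ 0 := by linarith
  have h2 : 1 - 2*a ≠ 0 := by linarith
  constructor
  · field_simp
    have h2' : 1 - a*2 ≠ 0 := by linarith
    field_simp
  · intro t; field_simp
    have h2' : 1 - a*2 ≠ 0 := by linarith
    field_simp
    ring
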